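/- arXiv:math/0005154 — 2 statements merged into one kernel-verified Lean document; each statement's English description precedes it below -/
import Mathlib

section
/- Let f : ℝ → ℝ be continuously differentiable and R > 0. Then f(R)^2 ≤ (2/R) ∫_{R}^{R+1} (|f'(r)|^2 + |f(r)|^2) r dr. -/
open MeasureTheory

/-- Trace-type inequality: `f(R)^2 ≤ (2/R) ∫_R^{R+1} (|f'|^2 + |f|^2) r dr`. -/
theorem stmt0 (f : ℝ → ℝ) (hf : ContDiff ℝ 1 f) (R : ℝ) (hR : 0 < R) :
    f R ^ 2 ≤ (2 / R) * ∫ r in R..(R + 1), (|deriv f r| ^ 2 + |f r| ^ 2) * r := by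
  have hfc : Continuous f := hf.continuous
  have hf' : Continuous (deriv f) := hf.continuous_deriv le_rfl
  have hdiff : Differentiable ℝ f := hf.differentiable one_ne_zero
  set C : ℝ := ∫ t in R..(R+1), (deriv f t ^ 2 + f t ^ 2) with hC
  have hcont : Continuous (fun t => deriv f t ^ 2 + f t ^ 2) := by continuity
  have hnonneg : ∀ t, (0:ℝ) ≤ deriv f t ^ 2 + f t ^ 2 := fun t => by positivity
  have hRle : R ≤ R + 1 := by linarith
  have hintC : IntervalIntegrable (fun t => deriv f t ^ 2 + f t ^ 2) volume R (R+1) :=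
    hcont.intervalIntegrable _ _
  -- Step A
  have stepA : ∀ r ∈ Set.Icc R (R+1), f R ^ 2 ≤ f r ^ 2 + C := by
    intro r hr
    have hRr : R ≤ r := hr.1
    have hftc : (∫ t in R..r, 2 * f t * deriv f t) = f r ^ 2 - f R ^ 2 := by
      have hder : ∀ t ∈ Set.uIcc R r, HasDerivAt (fun x => f x ^ 2) (2 * f t * deriv f t) t := by
        intro t _
        have := ((hdiff t).hasDerivAt).fun_pow 2
        simpa [pow_one, mul_comm, mul_assoc] using this
      have hint : IntervalIntegrable (fun t => 2 * f t * deriv f t) volume R r :=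
        (Continuous.intervalIntegrable (by continuity) _ _)
      simpa using intervalIntegral.integral_eq_sub_of_hasDerivAt hder hint
    have habs : |∫ t in R..r, 2 * f t * deriv f t| ≤ ∫ t in R..r, deriv f t ^ 2 + f t ^ 2 := by
      have h1 : |∫ t in R..r, 2 * f t * deriv f t| ≤ ∫ t in R..r, |2 * f t * deriv f t| := by
        apply intervalIntegral.abs_integral_le_integral_abs hRr
      refine h1.trans ?_
      apply intervalIntegral.integral_mono_on hRr
        ((Continuous.intervalIntegrable (by continuity) _ _))
        (hcont.intervalIntegrable _ _)
      intro t _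
      have := two_mul_le_add_sq (f t) (deriv f t)
      have habs2 : |2 * f t * deriv f t| = 2 * |f t| * |deriv f t| := by
        rw [abs_mul, abs_mul]; simp
      rw [habs2]
      nlinarith [two_mul_le_add_sq |f t| |deriv f t|, abs_nonneg (f t), abs_nonneg (deriv f t),
        sq_abs (f t), sq_abs (deriv f t)]
    have hsub : (∫ t in R..r, deriv f t ^ 2 + f t ^ 2) ≤ C := by
      rw [hC]
      apply intervalIntegral.integral_mono_interval le_rfl hRr hr.2
      · filter_upwards with t using hnonneg t
      · exact hintC
    have : f R ^ 2 = f r ^ 2 - ∫ t in R..r, 2 * f t * deriv f t := by linarith [hftc]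
    have := neg_abs_le (∫ t in R..r, 2 * f t * deriv f t)
    linarith [habs, hsub]
  -- Step B : f R ^ 2 ≤ 2 * C
  have stepB : f R ^ 2 ≤ 2 * C := by
    have h1 : f R ^ 2 = ∫ r in R..(R+1), (f R ^ 2 : ℝ) := by
      rw [intervalIntegral.integral_const]; simp
    have h2 : (∫ r in R..(R+1), (f R ^ 2 : ℝ)) ≤ ∫ r in R..(R+1), (f r ^ 2 + C) := by
      apply intervalIntegral.integral_mono_on hRle
        (intervalIntegrable_const)
        (((hfc.pow 2).add continuous_const).intervalIntegrable _ _)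
      intro r hr
      exact stepA r hr
    have h3 : (∫ r in R..(R+1), (f r ^ 2 + C)) = (∫ r in R..(R+1), f r ^ 2) + C := by
      rw [intervalIntegral.integral_add ((hfc.fun_pow 2).intervalIntegrable _ _)
        intervalIntegrable_const, intervalIntegral.integral_const]
      simp
    have h4 : (∫ r in R..(R+1), f r ^ 2) ≤ C := by
      rw [hC]
      apply intervalIntegral.integral_mono_on hRle
        ((hfc.fun_pow 2).intervalIntegrable _ _)
        hintC
      intro r _
      nlinarith [sq_nonneg (deriv f r)]
    linarith
  -- Step C
  have stepC : 2 * C ≤ (2 / R) * ∫ r in R..(R + 1), (|deriv f r| ^ 2 + |f r| ^ 2) * r := by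
    have hkey : (∫ r in R..(R+1), 2 * (deriv f r ^ 2 + f r ^ 2))
        ≤ ∫ r in R..(R+1), (2/R) * ((|deriv f r| ^ 2 + |f r| ^ 2) * r) := by
      apply intervalIntegral.integral_mono_on hRle
        ((Continuous.intervalIntegrable (by continuity) _ _))
        ((Continuous.intervalIntegrable (by continuity) _ _))
      intro r hr
      have hA : (0:ℝ) ≤ deriv f r ^ 2 + f r ^ 2 := hnonneg r
      have hrR : R ≤ r := hr.1
      have : (2:ℝ) ≤ (2/R) * r := by
        rw [div_mul_eq_mul_div, le_div_iff₀ hR]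
        nlinarith
      calc 2 * (deriv f r ^ 2 + f r ^ 2) ≤ ((2/R) * r) * (deriv f r ^ 2 + f r ^ 2) := by
            nlinarith
        _ = (2/R) * ((|deriv f r| ^ 2 + |f r| ^ 2) * r) := by
            rw [sq_abs, sq_abs]; ring
    have e1 : (∫ r in R..(R+1), 2 * (deriv f r ^ 2 + f r ^ 2)) = 2 * C := by
      rw [hC, intervalIntegral.integral_const_mul]
    have e2 : (∫ r in R..(R+1), (2/R) * ((|deriv f r| ^ 2 + |f r| ^ 2) * r))
        = (2/R) * ∫ r in R..(R+1), (|deriv f r| ^ 2 + |f r| ^ 2) * r := by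
      rw [intervalIntegral.integral_const_mul]
    rw [← e1, ← e2]; exact hkey
  linarith
end

section
/- There exists a constant c > 0 such that for every continuously differentiable function f : ℝ² → ℝ and every ρ > 0, ∫_{ρ ≤ |x| ≤ 2ρ} f(x)²/|x|² dx ≤ c ( ∫_{2ρ ≤ |x| ≤ 4ρ} f(x)²/|x|² dx + ∫_{ρ ≤ |x| ≤ 4ρ} |∂_r f(x)|² dx ), where ∂_r f denotes the radial derivative of f, and the constant c is independent of ρ. -/
open MeasureTheory

open MeasureTheory Set Pointwise

set_option maxHeartbeats 1000000
noncomputable section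
namespace Hardy

abbrev E2 := EuclideanSpace ℝ (Fin 2)

lemma isCompact_ann (a b : ℝ) : IsCompact {x : E2 | a ≤ ‖x‖ ∧ ‖x‖ ≤ b} := by
  have hclosed : IsClosed {x : E2 | a ≤ ‖x‖ ∧ ‖x‖ ≤ b} := by
    rw [setOf_and]
    exact (isClosed_le continuous_const continuous_norm).inter
      (isClosed_le continuous_norm continuous_const)
  refine Metric.isCompact_of_isClosed_isBounded hclosed ?_
  exact (Metric.isBounded_closedBall (x := (0:E2)) (r := b)).subset
    (fun x hx => by simpa [Metric.mem_closedBall] using hx.2)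

lemma finrank_E2 : Module.finrank ℝ E2 = 2 := by
  simp [finrank_euclideanSpace]

variable {f : E2 → ℝ}

lemma Dcont (hf : ContDiff ℝ 1 f) :
    ContinuousOn (fun y : E2 => fderiv ℝ f y (‖y‖⁻¹ • y)) {y : E2 | y ≠ 0} :=
  ((hf.continuous_fderiv one_ne_zero).continuousOn).clm_apply
    ((continuous_norm.continuousOn.inv₀ (fun y hy => norm_ne_zero_iff.2 hy)).smul
      continuousOn_id)

lemma radial_eq {x : E2} (hx : x ≠ 0) {t : ℝ} (ht : 0 < t) :
    ‖x‖ * fderiv ℝ f (t • x) (‖t • x‖⁻¹ • (t • x)) = fderiv ℝ f (t • x) x := by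
  have hnx : ‖x‖ ≠ 0 := norm_ne_zero_iff.2 hx
  have h1 : ‖t • x‖⁻¹ • (t • x) = ‖x‖⁻¹ • x := by
    rw [norm_smul, Real.norm_eq_abs, abs_of_pos ht, smul_smul, mul_inv]
    rw [mul_assoc, ← smul_smul, smul_smul]
    congr 1
    field_simp
  rw [h1, ← smul_eq_mul, ← _root_.map_smul, smul_smul, mul_inv_cancel₀ hnx, one_smul]

lemma ftc (hf : ContDiff ℝ 1 f) {x : E2} (hx : x ≠ 0) :
    f ((2:ℝ) • x) - f x
      = ∫ t in (1:ℝ)..2, ‖x‖ * fderiv ℝ f (t • x) (‖t • x‖⁻¹ • (t • x)) := by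
  have hderiv : ∀ t ∈ uIcc (1:ℝ) 2,
      HasDerivAt (fun s : ℝ => f (s • x)) (‖x‖ * fderiv ℝ f (t • x) (‖t • x‖⁻¹ • (t • x))) t := by
    intro t ht
    have htpos : 0 < t := by
      simp [uIcc_of_le (by norm_num : (1:ℝ) ≤ 2)] at ht; linarith [ht.1]
    have h1 : HasDerivAt (fun s : ℝ => s • x) ((1:ℝ) • x) t := (hasDerivAt_id t).smul_const x
    have h2 := ((hf.differentiable one_ne_zero) (t • x)).hasFDerivAt.comp_hasDerivAt t h1
    rw [radial_eq hx htpos]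
    simp only [one_smul] at h2; exact h2
  have hcont : ContinuousOn (fun t : ℝ => ‖x‖ * fderiv ℝ f (t • x) (‖t • x‖⁻¹ • (t • x)))
      (uIcc (1:ℝ) 2) := by
    have hmap : MapsTo (fun t : ℝ => t • x) (uIcc (1:ℝ) 2) {y : E2 | y ≠ 0} := by
      intro t ht
      have htpos : 0 < t := by
        simp [uIcc_of_le (by norm_num : (1:ℝ) ≤ 2)] at ht; linarith [ht.1]
      simp only [mem_setOf_eq]
      exact smul_ne_zero htpos.ne' hx
    exact continuousOn_const.mul
      (((Dcont hf).comp ((continuous_id.smul continuous_const).continuousOn) hmap))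
  rw [intervalIntegral.integral_eq_sub_of_hasDerivAt hderiv hcont.intervalIntegrable]
  norm_num

lemma cs_aux {g : ℝ → ℝ} (hg : IntegrableOn g (Ioc (1:ℝ) 2))
    (hg2 : IntegrableOn (fun t => g t ^ 2) (Ioc (1:ℝ) 2)) :
    (∫ t in Ioc (1:ℝ) 2, g t) ^ 2 ≤ ∫ t in Ioc (1:ℝ) 2, g t ^ 2 := by
  set m := ∫ t in Ioc (1:ℝ) 2, g t with hm
  have h0 : 0 ≤ ∫ t in Ioc (1:ℝ) 2, (g t - m) ^ 2 :=
    integral_nonneg fun t => sq_nonneg _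
  have hexp : ∫ t in Ioc (1:ℝ) 2, (g t - m) ^ 2
      = (∫ t in Ioc (1:ℝ) 2, g t ^ 2) - m ^ 2 := by
    have hc : IntegrableOn (fun _ : ℝ => m ^ 2) (Ioc (1:ℝ) 2) :=
      integrableOn_const measure_Ioc_lt_top.ne
    have hmg : IntegrableOn (fun t => 2 * m * g t) (Ioc (1:ℝ) 2) := hg.const_mul _
    have h3 : ∀ t, (g t - m) ^ 2 = g t ^ 2 - 2 * m * g t + m ^ 2 := fun t => by ring
    simp_rw [h3]
    have e1 : ∫ t in Ioc (1:ℝ) 2, (g t ^ 2 - 2 * m * g t + m ^ 2)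
        = (∫ t in Ioc (1:ℝ) 2, (g t ^ 2 - 2 * m * g t)) + ∫ _t in Ioc (1:ℝ) 2, (m ^ 2 : ℝ) :=
      integral_add (hg2.sub hmg) hc
    have e2 : ∫ t in Ioc (1:ℝ) 2, (g t ^ 2 - 2 * m * g t)
        = (∫ t in Ioc (1:ℝ) 2, g t ^ 2) - ∫ t in Ioc (1:ℝ) 2, 2 * m * g t :=
      integral_sub hg2 hmg
    have hvol : (volume (Ioc (1:ℝ) 2)).toReal = 1 := by simp [Real.volume_Ioc]; norm_num
    rw [e1, e2, integral_const_mul, setIntegral_const, measureReal_def, hvol, ← hm, one_smul]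
    ring
  linarith [h0, hexp ▸ h0]

theorem main (hf : ContDiff ℝ 1 f) (ρ : ℝ) (hρ : 0 < ρ) :
    (∫ x in {x : E2 | ρ ≤ ‖x‖ ∧ ‖x‖ ≤ 2 * ρ}, f x ^ 2 / ‖x‖ ^ 2) ≤
      2 * ((∫ x in {x : E2 | 2 * ρ ≤ ‖x‖ ∧ ‖x‖ ≤ 4 * ρ}, f x ^ 2 / ‖x‖ ^ 2) +
           ∫ x in {x : E2 | ρ ≤ ‖x‖ ∧ ‖x‖ ≤ 4 * ρ}, (fderiv ℝ f x (‖x‖⁻¹ • x)) ^ 2) := by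
  set D : E2 → ℝ := fun y => fderiv ℝ f y (‖y‖⁻¹ • y) with hD
  set h : E2 → ℝ := fun y => f y ^ 2 / ‖y‖ ^ 2 with hh
  set A : Set E2 := {x : E2 | ρ ≤ ‖x‖ ∧ ‖x‖ ≤ 2 * ρ} with hAdef
  set A' : Set E2 := {x : E2 | 2 * ρ ≤ ‖x‖ ∧ ‖x‖ ≤ 4 * ρ} with hA'def
  set B : Set E2 := {x : E2 | ρ ≤ ‖x‖ ∧ ‖x‖ ≤ 4 * ρ} with hBdef
  set K : E2 → ℝ := fun x => ∫ t in Ioc (1:ℝ) 2, D (t • x) ^ 2 with hK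
  -- basic facts
  have hA_ne : ∀ x ∈ A, x ≠ 0 := fun x hx h0 => by
    have h1 : ρ ≤ ‖x‖ := hx.1
    rw [h0, norm_zero] at h1; linarith
  have hB_ne : ∀ x ∈ B, x ≠ 0 := fun x hx h0 => by
    have h1 : ρ ≤ ‖x‖ := hx.1
    rw [h0, norm_zero] at h1; linarith
  have hAmeas : MeasurableSet A := (isCompact_ann ρ (2*ρ)).isClosed.measurableSet
  have hDc : ContinuousOn D {y : E2 | y ≠ 0} := Dcont hf
  have hhc : ContinuousOn h {y : E2 | y ≠ 0} := by
    refine ContinuousOn.div (hf.continuous.pow 2).continuousOn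
      ((continuous_norm.pow 2).continuousOn) ?_
    intro y hy
    exact pow_ne_zero _ (norm_ne_zero_iff.2 hy)
  -- integrability of h on A' and of D^2 on B
  have h_int_A' : IntegrableOn h A' := by
    refine (hhc.mono ?_).integrableOn_compact (isCompact_ann _ _)
    intro y hy h0
    have h1 : 2 * ρ ≤ ‖y‖ := hy.1
    rw [h0, norm_zero] at h1; linarith
  have h_int_A : IntegrableOn h A := by
    refine (hhc.mono ?_).integrableOn_compact (isCompact_ann _ _)
    intro y hy; exact hA_ne y hy
  have hD2cB : ContinuousOn (fun y => D y ^ 2) {y : E2 | y ≠ 0} := hDc.pow 2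
  have h_int_B : IntegrableOn (fun y => D y ^ 2) B := by
    refine (hD2cB.mono ?_).integrableOn_compact (isCompact_ann _ _)
    intro y hy; exact hB_ne y hy
  -- product integrability for Fubini
  have hFprod : Integrable (fun p : E2 × ℝ => D (p.2 • p.1) ^ 2)
      ((volume.restrict A).prod (volume.restrict (Ioc (1:ℝ) 2))) := by
    rw [Measure.prod_restrict]
    have hmaps : MapsTo (fun p : E2 × ℝ => p.2 • p.1) (A ×ˢ Icc (1:ℝ) 2) {y : E2 | y ≠ 0} := by
      rintro ⟨x, t⟩ ⟨hx, ht⟩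
      have : (0:ℝ) < t := lt_of_lt_of_le one_pos ht.1
      exact smul_ne_zero this.ne' (hA_ne x hx)
    have hcont : ContinuousOn (fun p : E2 × ℝ => D (p.2 • p.1) ^ 2) (A ×ˢ Icc (1:ℝ) 2) :=
      hD2cB.comp (continuous_snd.smul continuous_fst).continuousOn hmaps
    exact (hcont.integrableOn_compact ((isCompact_ann ρ (2*ρ)).prod isCompact_Icc)).mono_set
      (prod_mono_right Ioc_subset_Icc_self)
  -- pointwise bound on A
  have hpt : ∀ x ∈ A, h x ≤ 8 * h ((2:ℝ) • x) + 2 * K x := by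
    intro x hxA
    have hx : x ≠ 0 := hA_ne x hxA
    have hnx : (0:ℝ) < ‖x‖ := norm_pos_iff.2 hx
    have hftc : f ((2:ℝ) • x) - f x = ∫ t in (1:ℝ)..2, ‖x‖ * D (t • x) := ftc hf hx
    have hpull : (∫ t in (1:ℝ)..2, ‖x‖ * D (t • x)) = ‖x‖ * ∫ t in (1:ℝ)..2, D (t • x) :=
      intervalIntegral.integral_const_mul _ _
    have hgc : ContinuousOn (fun t : ℝ => D (t • x)) (Icc (1:ℝ) 2) := by
      refine hDc.comp ((continuous_id.smul continuous_const).continuousOn) ?_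
      intro t ht
      exact smul_ne_zero (lt_of_lt_of_le one_pos ht.1).ne' hx
    have hgi : IntegrableOn (fun t : ℝ => D (t • x)) (Ioc (1:ℝ) 2) :=
      (hgc.integrableOn_compact isCompact_Icc).mono_set Ioc_subset_Icc_self
    have hgi2 : IntegrableOn (fun t : ℝ => D (t • x) ^ 2) (Ioc (1:ℝ) 2) :=
      ((hgc.pow 2).integrableOn_compact isCompact_Icc).mono_set Ioc_subset_Icc_self
    have hcs : (∫ t in Ioc (1:ℝ) 2, D (t • x)) ^ 2 ≤ K x := cs_aux hgi hgi2
    have hIoc : (∫ t in (1:ℝ)..2, D (t • x)) = ∫ t in Ioc (1:ℝ) 2, D (t • x) :=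
      intervalIntegral.integral_of_le (by norm_num)
    -- f x = f (2•x) - ‖x‖ * I
    have hfx : f x = f ((2:ℝ) • x) - ‖x‖ * ∫ t in Ioc (1:ℝ) 2, D (t • x) := by
      rw [← hIoc, ← hpull]
      linarith [hftc]
    have hsq : f x ^ 2 ≤ 2 * f ((2:ℝ) • x) ^ 2
        + 2 * ‖x‖ ^ 2 * (∫ t in Ioc (1:ℝ) 2, D (t • x)) ^ 2 := by
      rw [hfx]; nlinarith [sq_nonneg (f ((2:ℝ) • x) + ‖x‖ * ∫ t in Ioc (1:ℝ) 2, D (t • x))]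
    have hnorm2 : ‖(2:ℝ) • x‖ ^ 2 = 4 * ‖x‖ ^ 2 := by
      rw [norm_smul]; simp [Real.norm_eq_abs]; ring
    have hKnn : 0 ≤ K x := integral_nonneg fun t => sq_nonneg _
    have hcs' : 2 * ‖x‖ ^ 2 * (∫ t in Ioc (1:ℝ) 2, D (t • x)) ^ 2 ≤ 2 * ‖x‖ ^ 2 * K x := by
      nlinarith [hcs, sq_nonneg ‖x‖]
    show f x ^ 2 / ‖x‖ ^ 2 ≤ 8 * (f ((2:ℝ) • x) ^ 2 / ‖(2:ℝ) • x‖ ^ 2) + 2 * K x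
    rw [div_le_iff₀ (by positivity), hnorm2]
    have e : (8 * (f ((2:ℝ) • x) ^ 2 / (4 * ‖x‖ ^ 2)) + 2 * K x) * ‖x‖ ^ 2
        = 2 * f ((2:ℝ) • x) ^ 2 + 2 * ‖x‖ ^ 2 * K x := by
      field_simp; ring
    rw [e]
    linarith
  -- integrability of RHS pieces on A
  have h_int_h2 : IntegrableOn (fun x => h ((2:ℝ) • x)) A := by
    refine ContinuousOn.integrableOn_compact (isCompact_ann _ _) ?_
    refine hhc.comp (continuous_const_smul (2:ℝ)).continuousOn ?_
    intro x hx
    exact smul_ne_zero two_ne_zero (hA_ne x hx)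
  have h_int_K : IntegrableOn K A := by
    have := hFprod.integral_prod_left
    exact this
  -- Step 1: integrate the pointwise bound
  have step1 : (∫ x in A, h x) ≤ ∫ x in A, (8 * h ((2:ℝ) • x) + 2 * K x) := by
    refine setIntegral_mono_on h_int_A ?_ hAmeas hpt
    exact (h_int_h2.const_mul 8).add (h_int_K.const_mul 2)
  have step2 : (∫ x in A, (8 * h ((2:ℝ) • x) + 2 * K x))
      = 8 * (∫ x in A, h ((2:ℝ) • x)) + 2 * ∫ x in A, K x := by
    rw [integral_add (h_int_h2.const_mul 8) (h_int_K.const_mul 2),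
      integral_const_mul, integral_const_mul]
  -- scaling: 2 • A = A'
  have hsmulA : (2:ℝ) • A = A' := by
    ext y
    rw [mem_smul_set_iff_inv_smul_mem₀ (two_ne_zero)]
    simp only [hAdef, hA'def, mem_setOf_eq, norm_smul, norm_inv, Real.norm_ofNat]
    constructor
    · rintro ⟨h1, h2⟩; constructor <;> [linarith; linarith]
    · rintro ⟨h1, h2⟩; constructor <;> [linarith; linarith]
  have scaling1 : (∫ x in A, h ((2:ℝ) • x)) = (4:ℝ)⁻¹ * ∫ y in A', h y := by
    have := Measure.setIntegral_comp_smul_of_pos volume h A (by norm_num : (0:ℝ) < 2)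
    rw [this, finrank_E2, hsmulA, smul_eq_mul]
    norm_num
  -- Fubini
  have swap : (∫ x in A, K x) = ∫ t in Ioc (1:ℝ) 2, ∫ x in A, D (t • x) ^ 2 := by
    exact integral_integral_swap hFprod
  -- inner bound
  set J : ℝ := ∫ y in B, D y ^ 2 with hJ
  have hJnn : 0 ≤ J := integral_nonneg fun y => sq_nonneg _
  have inner_bd : ∀ t ∈ Ioc (1:ℝ) 2, (∫ x in A, D (t • x) ^ 2) ≤ J := by
    intro t ht
    have htpos : (0:ℝ) < t := lt_of_lt_of_le one_pos ht.1.le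
    have hsc := Measure.setIntegral_comp_smul_of_pos volume (fun y => D y ^ 2) A htpos
    rw [finrank_E2] at hsc
    have hsub : t • A ⊆ B := by
      rintro y ⟨x, hxA, rfl⟩
      simp only [hBdef, mem_setOf_eq, norm_smul, Real.norm_eq_abs, abs_of_pos htpos]
      rw [hAdef] at hxA
      constructor
      · calc ρ ≤ ‖x‖ := hxA.1
          _ = 1 * ‖x‖ := (one_mul _).symm
          _ ≤ t * ‖x‖ := by nlinarith [ht.1, norm_nonneg x]
      · calc t * ‖x‖ ≤ 2 * (2 * ρ) := by nlinarith [ht.2, norm_nonneg x, hxA.2, htpos]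
          _ = 4 * ρ := by ring
    have hmono : (∫ y in t • A, D y ^ 2) ≤ J := by
      rw [hJ]
      exact setIntegral_mono_set h_int_B (ae_of_all _ fun y => sq_nonneg _)
        (HasSubset.Subset.eventuallyLE hsub)
    have hnn : 0 ≤ ∫ y in t • A, D y ^ 2 := integral_nonneg fun y => sq_nonneg _
    rw [hsc, smul_eq_mul]
    have ht2 : (1:ℝ) ≤ t ^ 2 := by nlinarith [ht.1]
    calc (t ^ 2)⁻¹ * ∫ y in t • A, D y ^ 2 ≤ 1 * ∫ y in t • A, D y ^ 2 := by
          apply mul_le_mul_of_nonneg_right _ hnn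
          rw [inv_le_one_iff₀]; right; exact ht2
      _ = ∫ y in t • A, D y ^ 2 := one_mul _
      _ ≤ J := hmono
  have outer : (∫ t in Ioc (1:ℝ) 2, ∫ x in A, D (t • x) ^ 2) ≤ J := by
    have hint_t : IntegrableOn (fun t => ∫ x in A, D (t • x) ^ 2) (Ioc (1:ℝ) 2) := by
      have := hFprod.integral_prod_right
      exact this
    have hcstJ : IntegrableOn (fun _ : ℝ => J) (Ioc (1:ℝ) 2) :=
      integrableOn_const measure_Ioc_lt_top.ne
    calc (∫ t in Ioc (1:ℝ) 2, ∫ x in A, D (t • x) ^ 2)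
        ≤ ∫ _t in Ioc (1:ℝ) 2, J := setIntegral_mono_on hint_t hcstJ measurableSet_Ioc inner_bd
      _ = J := by
          rw [setIntegral_const]
          have : (volume (Ioc (1:ℝ) 2)).toReal = 1 := by simp [Real.volume_Ioc]; norm_num
          rw [measureReal_def, this, one_smul]
  -- combine
  have final : (∫ x in A, h x) ≤ 2 * ((∫ y in A', h y) + J) := by
    have := step1
    rw [step2, scaling1, swap] at this
    linarith [outer, this]
  exact final

end Hardy

end

/-- Scale-invariant Hardy-type estimate on annuli in the plane: there is a constant `c`,
independent of `ρ`, such that the weighted `L²` norm of `f` on the annulus `ρ ≤ ‖x‖ ≤ 2ρ`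
is controlled by the weighted `L²` norm on `2ρ ≤ ‖x‖ ≤ 4ρ` plus the `L²` norm of the
radial derivative on `ρ ≤ ‖x‖ ≤ 4ρ`. -/
theorem stmt1 :
    ∃ c : ℝ, 0 < c ∧
      ∀ (f : EuclideanSpace ℝ (Fin 2) → ℝ), ContDiff ℝ 1 f → ∀ ρ : ℝ, 0 < ρ →
        (∫ x in {x : EuclideanSpace ℝ (Fin 2) | ρ ≤ ‖x‖ ∧ ‖x‖ ≤ 2 * ρ}, f x ^ 2 / ‖x‖ ^ 2) ≤
          c * ((∫ x in {x : EuclideanSpace ℝ (Fin 2) | 2 * ρ ≤ ‖x‖ ∧ ‖x‖ ≤ 4 * ρ},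
                  f x ^ 2 / ‖x‖ ^ 2) +
               ∫ x in {x : EuclideanSpace ℝ (Fin 2) | ρ ≤ ‖x‖ ∧ ‖x‖ ≤ 4 * ρ},
                  (fderiv ℝ f x (‖x‖⁻¹ • x)) ^ 2) :=
  ⟨2, two_pos, fun _f hf ρ hρ => Hardy.main hf ρ hρ⟩
end
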